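/- There is an absolute constant C > 0 such that for all integers d₁ ≥ d₂ ≥ 0, all D ≥ 0, and all (τ,ξ) ∈ ℝ², the set {(τ₁,ξ₁) ∈ B_{d₁} : (τ−τ₁, ξ−ξ₁) ∈ B_{d₂} and |ξ₁ − (ξ−ξ₁)| ≥ D} has two-dimensional Lebesgue measure at most C 2^{d₁+d₂} / (2^{d₁/2} + D). -/
import Mathlib


open MeasureTheory Set
open scoped ENNReal NNReal

noncomputable section

/-- The Japanese bracket `⟨x⟩ = (1+|x|²)^{1/2}`. -/
def jap (x : ℝ) : ℝ := Real.sqrt (1 + x ^ 2)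

/-- The dyadic annulus `A_j = {(τ,ξ) : 2^j ≤ ⟨ξ⟩ < 2^{j+1}}`. -/
def Aset (j : ℕ) : Set (ℝ × ℝ) := {p | (2 : ℝ) ^ j ≤ jap p.2 ∧ jap p.2 < (2 : ℝ) ^ (j + 1)}

/-- The parabolic shell `B_d = {(τ,ξ) : 2^d ≤ ⟨τ-ξ²⟩ < 2^{d+1}}`. -/
def Bset (d : ℕ) : Set (ℝ × ℝ) :=
  {p | (2 : ℝ) ^ d ≤ jap (p.1 - p.2 ^ 2) ∧ jap (p.1 - p.2 ^ 2) < (2 : ℝ) ^ (d + 1)}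

/-- `B_{≥d} = ⋃_{d' ≥ d} B_{d'}`. -/
def Bge (d : ℕ) : Set (ℝ × ℝ) := {p | (2 : ℝ) ^ d ≤ jap (p.1 - p.2 ^ 2)}

/-- `B_{≤d} = ⋃_{0 ≤ d' ≤ d} B_{d'}`. -/
def Ble (d : ℕ) : Set (ℝ × ℝ) := {p | jap (p.1 - p.2 ^ 2) < (2 : ℝ) ^ (d + 1)}

/-- `B_{<d} = ⋃_{0 ≤ d' < d} B_{d'}` (empty when `d = 0`). -/
def Blt (d : ℕ) : Set (ℝ × ℝ) := ⋃ (d' : ℕ) (_ : d' < d), Bset d'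

/-- `A_{≤j} = ⋃_{0 ≤ j' ≤ j} A_{j'}`. -/
def Ale (j : ℕ) : Set (ℝ × ℝ) := {p | jap p.2 < (2 : ℝ) ^ (j + 1)}

/-- A reasonable function: bounded, measurable, compactly supported. -/
def Reasonable (f : ℝ × ℝ → ℂ) : Prop :=
  Measurable f ∧ (∃ C : ℝ, ∀ p, ‖f p‖ ≤ C) ∧ HasCompactSupport f

/-- A nonnegative (real-valued) function. -/
def NonnegFn (f : ℝ × ℝ → ℂ) : Prop := ∀ p, 0 ≤ (f p).re ∧ (f p).im = 0

/-- The `L²` norm of `f` restricted to a set `s ⊆ ℝ²`. -/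
def L2On (f : ℝ × ℝ → ℂ) (s : Set (ℝ × ℝ)) : ℝ≥0∞ :=
  (∫⁻ p in s, (‖f p‖₊ : ℝ≥0∞) ^ 2) ^ (1 / 2 : ℝ)

/-- The `L²(ℝ²)` (equivalently `L²_ξ L²_τ`) norm. -/
def L2 (f : ℝ × ℝ → ℂ) : ℝ≥0∞ := (∫⁻ p : ℝ × ℝ, (‖f p‖₊ : ℝ≥0∞) ^ 2) ^ (1 / 2 : ℝ)

/-- The `L¹_ξ L¹_τ` norm. -/
def L1L1 (f : ℝ × ℝ → ℂ) : ℝ≥0∞ := ∫⁻ p : ℝ × ℝ, (‖f p‖₊ : ℝ≥0∞)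

/-- The weighted norm `∥⟨ξ⟩^{-1} f∥_{L²_ξ L¹_τ}` (inner norm in `τ`, outer in `ξ`). -/
def L2L1w (f : ℝ × ℝ → ℂ) : ℝ≥0∞ :=
  (∫⁻ ξ : ℝ, ((ENNReal.ofReal (jap ξ))⁻¹ * ∫⁻ τ : ℝ, (‖f (τ, ξ)‖₊ : ℝ≥0∞)) ^ 2) ^ (1 / 2 : ℝ)

/-- The `L¹_ξ L²_τ` norm (inner norm in `τ`, outer in `ξ`). -/
def L1L2 (f : ℝ × ℝ → ℂ) : ℝ≥0∞ :=
  ∫⁻ ξ : ℝ, (∫⁻ τ : ℝ, (‖f (τ, ξ)‖₊ : ℝ≥0∞) ^ 2) ^ (1 / 2 : ℝ)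

/-- The Besov-type norm
`∥f∥_X = (∑_j [2^{-j} ∑_d 2^{d/2} ∥f∥_{L²(A_j ∩ B_d)}]²)^{1/2}`
(denoted `X̂^{-1,1/2,1}` in the paper). -/
def Xnorm (f : ℝ × ℝ → ℂ) : ℝ≥0∞ :=
  (∑' j : ℕ, ((2 : ℝ≥0∞) ^ (-(j : ℝ)) *
      ∑' d : ℕ, (2 : ℝ≥0∞) ^ ((d : ℝ) / 2) * L2On f (Aset j ∩ Bset d)) ^ 2) ^ (1 / 2 : ℝ)

/-- The norm `∥f∥_Y = ∥⟨ξ⟩^{-1} f∥_{L²_ξ L¹_τ} + ∥f∥_{L²_ξ L²_τ}`. -/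
def Ynorm (f : ℝ × ℝ → ℂ) : ℝ≥0∞ := L2L1w f + L2 f

/-- The sum-space norm `∥f∥_Z = inf {∥f₁∥_X + ∥f₂∥_Y : f = f₁ + f₂}`. -/
def Znorm (f : ℝ × ℝ → ℂ) : ℝ≥0∞ :=
  ⨅ g : ℝ × ℝ → ℂ, Xnorm g + Ynorm (fun p => f p - g p)

/-- The weight `w(τ,ξ) = max(1,-τ)^{10}` localizing to the upper half-plane. -/
def wfun (p : ℝ × ℝ) : ℝ := max 1 (-p.1) ^ 10

/-- The norm `∥f∥_W = ∥w f∥_Z`. -/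
def Wnorm (f : ℝ × ℝ → ℂ) : ℝ≥0∞ := Znorm (fun p => (wfun p : ℂ) * f p)

/-- Spacetime convolution `(f*g)(τ,ξ) = ∫∫ f(τ₁,ξ₁) g(τ-τ₁, ξ-ξ₁) dτ₁ dξ₁`. -/
def conv (f g : ℝ × ℝ → ℂ) (p : ℝ × ℝ) : ℂ := ∫ q : ℝ × ℝ, f q * g (p - q)

/-- The (Fourier side) `X^{s,b}` norm `∥⟨ξ⟩^s ⟨τ-ξ²⟩^b f∥_{L²_τ L²_ξ}`. -/
def XsbNorm (s b : ℝ) (f : ℝ × ℝ → ℂ) : ℝ≥0∞ :=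
  (∫⁻ p : ℝ × ℝ,
    (ENNReal.ofReal (jap p.2 ^ s * jap (p.1 - p.2 ^ 2) ^ b) * (‖f p‖₊ : ℝ≥0∞)) ^ 2) ^ (1 / 2 : ℝ)

/-- The bilinear-type expression `(w/⟨τ-ξ²⟩)·((f/w) * (g/w))`. -/
def Kop (f g : ℝ × ℝ → ℂ) : ℝ × ℝ → ℂ := fun p =>
  ((wfun p / jap (p.1 - p.2 ^ 2) : ℝ) : ℂ) *
    conv (fun q => f q / (wfun q : ℂ)) (fun q => g q / (wfun q : ℂ)) p

lemma abs_le_jap (x : ℝ) : |x| ≤ jap x := by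
  rw [jap, ← Real.sqrt_sq_eq_abs]
  exact Real.sqrt_le_sqrt (by nlinarith)

lemma key_resonance (d₁ d₂ : ℕ) (hd : d₂ ≤ d₁) (τ ξ τ₁ ξ₁ : ℝ)
    (h1 : |τ₁ - ξ₁ ^ 2| < 2 ^ (d₁ + 1)) (h2 : |τ - τ₁ - (ξ - ξ₁) ^ 2| < 2 ^ (d₂ + 1)) :
    |(2 * τ - ξ ^ 2) - (2 * ξ₁ - ξ) ^ 2| < 2 ^ (d₁ + 3) := by
  have h2' : |τ - τ₁ - (ξ - ξ₁) ^ 2| < 2 ^ (d₁ + 1) :=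
    lt_of_lt_of_le h2 (by apply pow_le_pow_right₀ one_le_two; omega)
  have e : (2 * τ - ξ ^ 2) - (2 * ξ₁ - ξ) ^ 2 =
      2 * ((τ₁ - ξ₁ ^ 2) + (τ - τ₁ - (ξ - ξ₁) ^ 2)) := by ring
  have habs := abs_add_le (τ₁ - ξ₁ ^ 2) (τ - τ₁ - (ξ - ξ₁) ^ 2)
  have e2 : |(2 : ℝ) * ((τ₁ - ξ₁ ^ 2) + (τ - τ₁ - (ξ - ξ₁) ^ 2))| =
      2 * |(τ₁ - ξ₁ ^ 2) + (τ - τ₁ - (ξ - ξ₁) ^ 2)| := by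
    rw [abs_mul]; norm_num
  have hp : (2 : ℝ) ^ (d₁ + 3) = 2 * (2 ^ (d₁ + 1) + 2 ^ (d₁ + 1)) := by ring
  rw [e, e2]
  linarith

/-- The core real inequality bounding the length of the ξ₁-projection. -/
lemma key_length_bound (d₁ : ℕ) (D c : ℝ) (hD : 0 ≤ D) :
    Real.sqrt (c + 2 ^ (d₁ + 3)) - max D (Real.sqrt (max 0 (c - 2 ^ (d₁ + 3)))) ≤
      2 ^ (d₁ + 5) / ((2 : ℝ) ^ ((d₁ : ℝ) / 2) + D) := by
  set r : ℝ := Real.sqrt (c + 2 ^ (d₁ + 3)) with hrdef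
  set t : ℝ := max D (Real.sqrt (max 0 (c - 2 ^ (d₁ + 3)))) with htdef
  set P : ℝ := (2 : ℝ) ^ ((d₁ : ℝ) / 2) with hPdef
  have hP : 0 < P := Real.rpow_pos_of_pos (by norm_num) _
  have hP2 : P ^ 2 = 2 ^ d₁ := by
    rw [hPdef, ← Real.rpow_natCast ((2 : ℝ) ^ ((d₁ : ℝ) / 2)) 2,
      ← Real.rpow_mul (by norm_num)]
    rw [show (d₁ : ℝ) / 2 * (2 : ℕ) = (d₁ : ℝ) by push_cast; ring]
    exact Real.rpow_natCast 2 d₁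
  have hDen : 0 < P + D := by linarith
  have hR : (0 : ℝ) ≤ 2 ^ (d₁ + 5) / (P + D) := by positivity
  have hDt : D ≤ t := le_max_left _ _
  have htnn : 0 ≤ t := le_trans hD hDt
  rcases le_or_gt (c + 2 ^ (d₁ + 3)) 0 with h | h
  · have hr0 : r = 0 := Real.sqrt_eq_zero_of_nonpos h
    linarith
  · have hrnn : 0 ≤ r := Real.sqrt_nonneg _
    have hr2 : r ^ 2 = c + 2 ^ (d₁ + 3) := Real.sq_sqrt h.le
    have hmax : Real.sqrt (max 0 (c - 2 ^ (d₁ + 3))) ^ 2 = max 0 (c - 2 ^ (d₁ + 3)) :=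
      Real.sq_sqrt (le_max_left _ _)
    have ht2 : c - 2 ^ (d₁ + 3) ≤ t ^ 2 := by
      have hle : Real.sqrt (max 0 (c - 2 ^ (d₁ + 3))) ≤ t := le_max_right _ _
      have := pow_le_pow_left₀ (Real.sqrt_nonneg (max 0 (c - 2 ^ (d₁ + 3)))) hle 2
      have hm : c - 2 ^ (d₁ + 3) ≤ max 0 (c - 2 ^ (d₁ + 3)) := le_max_right _ _
      linarith [this, hmax ▸ this]
    have hdiff : r ^ 2 - t ^ 2 ≤ 2 ^ (d₁ + 4) := by
      have : (2 : ℝ) ^ (d₁ + 4) = 2 ^ (d₁ + 3) + 2 ^ (d₁ + 3) := by ring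
      linarith
    rcases le_or_gt r t with hrt | hrt
    · linarith
    · rcases le_or_gt P r with hPr | hPr
      · rw [le_div_iff₀ hDen]
        have h1 : (r - t) * (P + D) ≤ (r - t) * (r + t) := by
          apply mul_le_mul_of_nonneg_left _ (by linarith)
          linarith
        have h2 : (r - t) * (r + t) = r ^ 2 - t ^ 2 := by ring
        have h3 : (2 : ℝ) ^ (d₁ + 4) ≤ 2 ^ (d₁ + 5) := by
          apply pow_le_pow_right₀ one_le_two; omega
        linarith
      · rw [le_div_iff₀ hDen]
        have hplus : P + D ≤ 2 * P := by linarith [hDt.trans hrt.le, hPr]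
        have hmul : (r - t) * (P + D) ≤ P * (2 * P) :=
          mul_le_mul (by linarith) hplus hDen.le hP.le
        have hpow : (2 : ℝ) ^ (d₁ + 5) = 32 * 2 ^ d₁ := by ring
        nlinarith [hP2]

/-- **Measure bound for the resonant set**: for `d₁ ≥ d₂ ≥ 0`, `D ≥ 0` and any
`(τ,ξ) ∈ ℝ²`, the set `{(τ₁,ξ₁) ∈ B_{d₁} : (τ-τ₁, ξ-ξ₁) ∈ B_{d₂}, |ξ₁-(ξ-ξ₁)| ≥ D}`
has measure at most `C 2^{d₁+d₂}/(2^{d₁/2}+D)`. -/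
theorem resonant_set_measure_bound :
    ∃ C : ℝ, 0 < C ∧ ∀ (d₁ d₂ : ℕ), d₂ ≤ d₁ → ∀ D : ℝ, 0 ≤ D → ∀ τ ξ : ℝ,
      volume {q : ℝ × ℝ | q ∈ Bset d₁ ∧ (τ - q.1, ξ - q.2) ∈ Bset d₂ ∧
          D ≤ |q.2 - (ξ - q.2)|} ≤
        ENNReal.ofReal (C * (2 : ℝ) ^ (d₁ + d₂) / ((2 : ℝ) ^ ((d₁ : ℝ) / 2) + D)) := by
  refine ⟨128, by norm_num, ?_⟩
  intro d₁ d₂ hd D hD τ ξ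
  set c : ℝ := 2 * τ - ξ ^ 2 with hc
  set r : ℝ := Real.sqrt (c + 2 ^ (d₁ + 3)) with hrdef
  set t : ℝ := max D (Real.sqrt (max 0 (c - 2 ^ (d₁ + 3)))) with htdef
  set S : Set ℝ :=
    Icc ((ξ - r) / 2) ((ξ - t) / 2) ∪ Icc ((ξ + t) / 2) ((ξ + r) / 2) with hSdef
  set F : Set (ℝ × ℝ) :=
    {p : ℝ × ℝ | p.1 ∈ S ∧ |τ - p.2 - (ξ - p.1) ^ 2| < 2 ^ (d₂ + 1)} with hFdef
  have hSmeas : MeasurableSet S := (measurableSet_Icc).union measurableSet_Icc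
  have hFmeas : MeasurableSet F := by
    have h1 : MeasurableSet {p : ℝ × ℝ | p.1 ∈ S} := measurable_fst hSmeas
    have h2 : MeasurableSet {p : ℝ × ℝ | |τ - p.2 - (ξ - p.1) ^ 2| < 2 ^ (d₂ + 1)} := by
      have hopen : IsOpen {p : ℝ × ℝ | |τ - p.2 - (ξ - p.1) ^ 2| < 2 ^ (d₂ + 1)} := by
        apply isOpen_lt _ continuous_const
        fun_prop
      exact hopen.measurableSet
    exact h1.inter h2
  have hsub : {q : ℝ × ℝ | q ∈ Bset d₁ ∧ (τ - q.1, ξ - q.2) ∈ Bset d₂ ∧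
      D ≤ |q.2 - (ξ - q.2)|} ⊆ Prod.swap ⁻¹' F := by
    rintro ⟨τ₁, ξ₁⟩ hq
    simp only [Bset, Set.mem_setOf_eq] at hq
    obtain ⟨⟨h1l, h1r⟩, ⟨h2l, h2r⟩, h3⟩ := hq
    simp only [hFdef, Set.mem_preimage, Prod.swap_prod_mk, Set.mem_setOf_eq]
    have ha1 : |τ₁ - ξ₁ ^ 2| < 2 ^ (d₁ + 1) := lt_of_le_of_lt (abs_le_jap _) h1r
    have ha2 : |τ - τ₁ - (ξ - ξ₁) ^ 2| < 2 ^ (d₂ + 1) := lt_of_le_of_lt (abs_le_jap _) h2r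
    have h3' : D ≤ |2 * ξ₁ - ξ| := by
      have : ξ₁ - (ξ - ξ₁) = 2 * ξ₁ - ξ := by ring
      simpa [this] using h3
    have hkey := key_resonance d₁ d₂ hd τ ξ τ₁ ξ₁ ha1 ha2
    set u : ℝ := 2 * ξ₁ - ξ with hu
    have hur : |u| ≤ r := by
      rw [hrdef, ← Real.sqrt_sq_eq_abs]
      apply Real.sqrt_le_sqrt
      have := abs_lt.mp hkey
      nlinarith [this.1, this.2]
    have hut : t ≤ |u| := by
      refine max_le h3' ?_
      rw [← Real.sqrt_sq_eq_abs]
      apply Real.sqrt_le_sqrt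
      refine max_le (sq_nonneg u) ?_
      have := abs_lt.mp hkey
      nlinarith [this.1, this.2]
    constructor
    · -- ξ₁ ∈ S
      show ξ₁ ∈ S
      have huval : u = 2 * ξ₁ - ξ := hu
      rcases le_or_gt 0 u with hu0 | hu0
      · right
        rw [abs_of_nonneg hu0] at hur hut
        exact Set.mem_Icc.mpr ⟨by linarith, by linarith⟩
      · left
        rw [abs_of_neg hu0] at hur hut
        exact Set.mem_Icc.mpr ⟨by linarith, by linarith⟩
    · -- interval condition for τ₁
      exact ha2
  have hslice : ∀ ξ₁ : ℝ, volume (Prod.mk ξ₁ ⁻¹' F) =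
      S.indicator (fun _ => ENNReal.ofReal ((2 : ℝ) ^ (d₂ + 2))) ξ₁ := by
    intro ξ₁
    by_cases h : ξ₁ ∈ S
    · have heq : Prod.mk ξ₁ ⁻¹' F =
          Ioo (τ - (ξ - ξ₁) ^ 2 - 2 ^ (d₂ + 1)) (τ - (ξ - ξ₁) ^ 2 + 2 ^ (d₂ + 1)) := by
        ext τ₁
        simp only [hFdef, Set.mem_preimage, Set.mem_setOf_eq, Set.mem_Ioo, h, true_and,
          abs_lt]
        constructor
        · rintro ⟨hl, hr⟩; constructor <;> linarith
        · rintro ⟨hl, hr⟩; constructor <;> linarith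
      rw [heq, Real.volume_Ioo, Set.indicator_of_mem h]
      congr 1; ring
    · have heq : Prod.mk ξ₁ ⁻¹' F = ∅ := by
        ext τ₁; simp [hFdef, h]
      rw [heq, measure_empty, Set.indicator_of_notMem h]
  have hSvol : volume S ≤ ENNReal.ofReal (r - t) := by
    refine le_trans (measure_union_le _ _) ?_
    rw [Real.volume_Icc, Real.volume_Icc]
    have e1 : (ξ - t) / 2 - (ξ - r) / 2 = (r - t) / 2 := by ring
    have e2 : (ξ + r) / 2 - (ξ + t) / 2 = (r - t) / 2 := by ring
    rw [e1, e2]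
    rcases le_or_gt 0 (r - t) with hrt | hrt
    · rw [← ENNReal.ofReal_add (by linarith) (by linarith)]
      exact ENNReal.ofReal_le_ofReal (by linarith)
    · have hz : ENNReal.ofReal ((r - t) / 2) = 0 := ENNReal.ofReal_eq_zero.mpr (by linarith)
      rw [hz]; simp
  calc volume {q : ℝ × ℝ | q ∈ Bset d₁ ∧ (τ - q.1, ξ - q.2) ∈ Bset d₂ ∧
          D ≤ |q.2 - (ξ - q.2)|}
      ≤ volume (Prod.swap ⁻¹' F) := measure_mono hsub
    _ = volume F := by
        rw [Measure.volume_eq_prod]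
        exact (Measure.measurePreserving_swap).measure_preimage
          hFmeas.nullMeasurableSet
    _ = ∫⁻ ξ₁, volume (Prod.mk ξ₁ ⁻¹' F) := by
        rw [Measure.volume_eq_prod, Measure.prod_apply hFmeas]
    _ = ENNReal.ofReal ((2 : ℝ) ^ (d₂ + 2)) * volume S := by
        simp_rw [hslice]
        rw [lintegral_indicator_const hSmeas]
    _ ≤ ENNReal.ofReal ((2 : ℝ) ^ (d₂ + 2)) * ENNReal.ofReal (r - t) :=
        mul_le_mul_right hSvol _
    _ ≤ ENNReal.ofReal (128 * (2 : ℝ) ^ (d₁ + d₂) / ((2 : ℝ) ^ ((d₁ : ℝ) / 2) + D)) := by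
        rw [← ENNReal.ofReal_mul (by positivity)]
        apply ENNReal.ofReal_le_ofReal
        have hkey := key_length_bound d₁ D c hD
        rw [← hrdef, ← htdef] at hkey
        have hP : (0 : ℝ) < (2 : ℝ) ^ ((d₁ : ℝ) / 2) :=
          Real.rpow_pos_of_pos (by norm_num) _
        have hDen : (0 : ℝ) < (2 : ℝ) ^ ((d₁ : ℝ) / 2) + D := by linarith
        have heq : (2 : ℝ) ^ (d₂ + 2) * ((2 : ℝ) ^ (d₁ + 5) / ((2 : ℝ) ^ ((d₁ : ℝ) / 2) + D)) =
            128 * (2 : ℝ) ^ (d₁ + d₂) / ((2 : ℝ) ^ ((d₁ : ℝ) / 2) + D) := by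
          field_simp
          ring
        calc (2 : ℝ) ^ (d₂ + 2) * (r - t)
            ≤ (2 : ℝ) ^ (d₂ + 2) * ((2 : ℝ) ^ (d₁ + 5) / ((2 : ℝ) ^ ((d₁ : ℝ) / 2) + D)) :=
              mul_le_mul_of_nonneg_left hkey (by positivity)
          _ = _ := heq
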